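/- Let n ≥ 1 be an integer, let β be a real with 0 < β ≤ 1/n, let z₀ > 0 and let T be real with 0 < T < n/(2 z₀). Suppose Λ : [0, T] → ℝ is differentiable with Λ(t) > 0 and Λ′(t) ≥ 2β z(t) Λ(t) for all t ∈ [0, T], where z(t) = z₀/(1 − (2/n) z₀ t). Then Λ(t) ≥ Λ(0) · (1 − (2/n) z₀ t)^{−βn} for all t ∈ [0, T]. -/

import Mathlib

/-- Power-law lower bound: under `Λ'(t) ≥ 2β z(t) Λ(t)` with
`z(t) = z₀/(1 - (2/n) z₀ t)` and `0 < β ≤ 1/n`, one has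
`Λ(t) ≥ Λ(0) (1 - (2/n) z₀ t)^{-β n}` on `[0, T]`. -/
theorem stmt8 (n : ℕ) (hn : 1 ≤ n) (β z₀ T : ℝ)
    (hβ : 0 < β) (hβn : β ≤ 1 / n) (hz₀ : 0 < z₀)
    (hT0 : 0 < T) (hT : T < n / (2 * z₀))
    (z : ℝ → ℝ) (hz : ∀ t, z t = z₀ / (1 - (2 / (n : ℝ)) * z₀ * t))
    (Λ Λ' : ℝ → ℝ)
    (hderiv : ∀ t ∈ Set.Icc (0 : ℝ) T, HasDerivAt Λ (Λ' t) t)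
    (hpos : ∀ t ∈ Set.Icc (0 : ℝ) T, 0 < Λ t)
    (hineq : ∀ t ∈ Set.Icc (0 : ℝ) T, Λ' t ≥ 2 * β * z t * Λ t) :
    ∀ t ∈ Set.Icc (0 : ℝ) T,
      Λ t ≥ Λ 0 * (1 - (2 / (n : ℝ)) * z₀ * t) ^ (-(β * n)) := by
  have hn0 : (0 : ℝ) < n := by exact_mod_cast hn
  set c : ℝ := 2 / (n : ℝ) * z₀ with hc
  have hcpos : 0 < c := by positivity
  set p : ℝ := β * n with hp
  have hppos : 0 < p := by positivity
  -- positivity of the base on [0,T]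
  have hu : ∀ t ∈ Set.Icc (0 : ℝ) T, 0 < 1 - c * t := by
    intro t ht
    have h1 : c * t ≤ c * T := by
      exact mul_le_mul_of_nonneg_left ht.2 hcpos.le
    have h2 : c * T < 1 := by
      have : c * T < c * (n / (2 * z₀)) := mul_lt_mul_of_pos_left hT hcpos
      have hne : (n : ℝ) ≠ 0 := ne_of_gt hn0
      have : c * (n / (2 * z₀)) = 1 := by
        field_simp [hc]
        rw [hc]; field_simp
      linarith [mul_lt_mul_of_pos_left hT hcpos]
    linarith
  set g : ℝ → ℝ := fun t => Λ t * (1 - c * t) ^ p with hg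
  set g' : ℝ → ℝ := fun t => Λ' t * (1 - c * t) ^ p +
      Λ t * (-c * p * (1 - c * t) ^ (p - 1)) with hg'
  have hud : ∀ t : ℝ, HasDerivAt (fun s => 1 - c * s) (-c) t := by
    intro t
    simpa using ((hasDerivAt_id t).const_mul c).const_sub 1
  have hgd : ∀ t ∈ Set.Icc (0 : ℝ) T, HasDerivAt g (g' t) t := by
    intro t ht
    have hune : (1 - c * t) ≠ 0 := ne_of_gt (hu t ht)
    have h1 : HasDerivAt (fun s => (1 - c * s) ^ p) (-c * p * (1 - c * t) ^ (p - 1)) t :=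
      (hud t).rpow_const (Or.inl hune)
    exact (hderiv t ht).mul h1
  have hgc : ContinuousOn g (Set.Icc 0 T) := by
    intro t ht
    exact ((hgd t ht).continuousAt).continuousWithinAt
  have hg'nonneg : ∀ t ∈ Set.Icc (0 : ℝ) T, 0 ≤ g' t := by
    intro t ht
    have hut := hu t ht
    have hΛ := hpos t ht
    have hzval : z t = z₀ / (1 - c * t) := hz t
    have hi := hineq t ht
    have hrw : (1 - c * t) ^ p = (1 - c * t) ^ (p - 1) * (1 - c * t) := by
      rw [← Real.rpow_add_one (ne_of_gt hut)]
      ring_nf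
    have hkey : Λ' t * (1 - c * t) ^ p ≥ 2 * β * z₀ * Λ t * (1 - c * t) ^ (p - 1) := by
      have h2 : Λ' t * (1 - c * t) ^ p ≥ (2 * β * z t * Λ t) * ((1 - c * t) ^ p) :=
        mul_le_mul_of_nonneg_right hi (Real.rpow_nonneg hut.le _)
      have h3 : (2 * β * z t * Λ t) * ((1 - c * t) ^ p)
          = 2 * β * z₀ * Λ t * (1 - c * t) ^ (p - 1) := by
        rw [hzval, hrw]
        field_simp
      linarith [h2, h3.symm.le]
    have hcp : c * p = 2 * β * z₀ := by
      rw [hc, hp]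
      field_simp
    have : Λ t * (-c * p * (1 - c * t) ^ (p - 1))
        = -(2 * β * z₀ * Λ t * (1 - c * t) ^ (p - 1)) := by
      rw [neg_mul, hcp]; ring
    simp only [hg']
    rw [this]
    linarith
  have hmono : MonotoneOn g (Set.Icc 0 T) := by
    apply monotoneOn_of_hasDerivWithinAt_nonneg (convex_Icc 0 T) hgc
      (f' := g')
    · intro x hx
      rw [interior_Icc] at hx
      exact (hgd x (Set.mem_Icc_of_Ioo hx)).hasDerivWithinAt
    · intro x hx
      rw [interior_Icc] at hx
      exact hg'nonneg x (Set.mem_Icc_of_Ioo hx)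
  intro t ht
  have h0mem : (0 : ℝ) ∈ Set.Icc (0 : ℝ) T := Set.mem_Icc.2 ⟨le_refl 0, hT0.le⟩
  have hgt : g 0 ≤ g t := hmono h0mem ht ht.1
  have hg0 : g 0 = Λ 0 := by
    simp [hg, Real.one_rpow]
  have hut := hu t ht
  have hpow : (0:ℝ) < (1 - c * t) ^ p := Real.rpow_pos_of_pos hut _
  have hineq2 : Λ 0 ≤ Λ t * (1 - c * t) ^ p := by
    rw [← hg0]; exact hgt
  have hfinal : Λ 0 * (1 - c * t) ^ (-p) ≤ Λ t := by
    rw [Real.rpow_neg hut.le]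
    rw [← div_eq_mul_inv, div_le_iff₀ hpow]
    exact hineq2
  exact hfinal
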